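/- arXiv:1111.3464 — 5 statements merged into one kernel-verified Lean document; each statement's English description precedes it below -/
import Mathlib

section
/- If two sequences satisfy properties (C2) and (C3) of the p-ASF-1 definition and p(x_n, y_n) ≠ 0 for all n, then liminf_{n→∞} p(x_n, y_n) = 0. -/
open Filter Topology Set

/-- Two sequences are p-ASF-1 (conditions (C1), (C2), (C3)). -/
def ASF1 {X : Type*} (p : X → X → ℝ) (x y : ℕ → X) : Prop :=
  (∀ ε > (0:ℝ), ∃ δ > (0:ℝ), ∀ i, p (x i) (y i) < δ →
    Filter.limsup (fun n => p (x n) (y n)) Filter.atTop ≤ ε) ∧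
  (∀ ε > (0:ℝ), ∃ δ > (0:ℝ), ∀ i, ε < p (x i) (y i) → p (x i) (y i) < ε + δ →
    ∃ ν : ℕ, p (x (ν + i)) (y (ν + i)) ≤ ε) ∧
  (∀ i, p (x i) (y i) ≠ 0 → ∃ ν : ℕ, p (x (ν + i)) (y (ν + i)) < p (x i) (y i))

/-- A sequence is p-ASF-2 (condition (C4)). -/
def ASF2 {X : Type*} (p : X → X → ℝ) (x : ℕ → X) : Prop :=
  ∀ ε > (0:ℝ), ∃ δ > (0:ℝ), ∃ ν : ℕ, ∀ i j, ε < p (x i) (x j) → p (x i) (x j) < ε + δ →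
    p (x (ν + i)) (x (ν + j)) ≤ ε

/-- Condition (C5). -/
def C5 {X : Type*} (p : X → X → ℝ) (x : ℕ → X) : Prop :=
  ∀ i j, p (x i) (x j) ≠ 0 → ∃ ν : ℕ, p (x (ν + i)) (x (ν + j)) < p (x i) (x j)


theorem liminf_zero_of_C2_C3 {X : Type*} (p : X → X → ℝ) (hp : ∀ a b, 0 ≤ p a b)
    (x y : ℕ → X)
    (hC2 : ∀ ε > (0:ℝ), ∃ δ > (0:ℝ), ∀ i, ε < p (x i) (y i) → p (x i) (y i) < ε + δ →
      ∃ ν : ℕ, p (x (ν + i)) (y (ν + i)) ≤ ε)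
    (hC3 : ∀ i, p (x i) (y i) ≠ 0 → ∃ ν : ℕ, p (x (ν + i)) (y (ν + i)) < p (x i) (y i))
    (hne : ∀ n, p (x n) (y n) ≠ 0) :
    Filter.liminf (fun n => p (x n) (y n)) Filter.atTop = 0 := by
  set f : ℕ → ℝ := fun n => p (x n) (y n) with hf
  -- tail infima
  have hbdd : ∀ N : ℕ, BddBelow (Set.range fun i => f (i + N)) := by
    intro N
    exact ⟨0, by rintro a ⟨i, rfl⟩; exact hp _ _⟩
  set g : ℕ → ℝ := fun N => ⨅ i, f (i + N) with hg
  have hglt : ∀ N i, g N < f (i + N) := by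
    intro N i
    have hle : g N ≤ f (i + N) := ciInf_le (hbdd N) i
    rcases lt_or_eq_of_le hle with h | h
    · exact h
    · exfalso
      obtain ⟨ν, hν⟩ := hC3 (i + N) (hne _)
      have : g N ≤ f (ν + i + N) := ciInf_le (hbdd N) (ν + i)
      rw [show ν + i + N = ν + (i + N) by ring] at this
      have : f (i + N) ≤ f (ν + (i + N)) := h ▸ this
      exact absurd (lt_of_le_of_lt this hν) (lt_irrefl _)
  have hg0 : ∀ N, g N = 0 := by
    intro N
    have hge : 0 ≤ g N := le_ciInf fun i => hp _ _
    rcases hge.lt_or_eq with h | h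
    · exfalso
      obtain ⟨δ, hδ, hC2'⟩ := hC2 (g N) h
      have : (⨅ i, f (i + N)) < g N + δ := by
        have : g N < g N + δ := by linarith
        exact this
      obtain ⟨i, hi⟩ := exists_lt_of_ciInf_lt this
      obtain ⟨ν, hν⟩ := hC2' (i + N) (hglt N i) hi
      have h2 := hglt N (ν + i)
      rw [show ν + i + N = ν + (i + N) by ring] at h2
      exact absurd hν (not_le.2 h2)
    · exact h.symm
  -- frequently f n ≤ ε for all ε > 0
  have hfreq : ∀ ε > (0:ℝ), ∃ᶠ n in Filter.atTop, f n ≤ ε := by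
    intro ε hε
    rw [Filter.frequently_atTop]
    intro N
    have : (⨅ i, f (i + N)) < ε := by
      have : g N < ε := by rw [hg0 N]; exact hε
      exact this
    obtain ⟨i, hi⟩ := exists_lt_of_ciInf_lt this
    exact ⟨i + N, Nat.le_add_left N i, le_of_lt hi⟩
  have hbd : Filter.IsBoundedUnder (· ≥ ·) Filter.atTop f :=
    Filter.isBoundedUnder_of ⟨0, fun n => hp (x n) (y n)⟩
  have hcob : Filter.IsCoboundedUnder (· ≥ ·) Filter.atTop f :=
    Filter.IsCoboundedUnder.of_frequently_le (hfreq 1 one_pos)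
  refine le_antisymm ?_ ?_
  · by_contra h
    push_neg at h
    have := Filter.liminf_le_of_frequently_le (hfreq ((Filter.liminf f Filter.atTop)/2)
      (by linarith)) hbd
    linarith
  · exact Filter.le_liminf_of_le hcob (Filter.Eventually.of_forall fun n => hp (x n) (y n))
end

section
/- Let {x_n} be a p-ASF-2 sequence where p satisfies the mixed triangle inequalities p(x,y) ≤ p(x,z) + r(z,y) and p(x,y) ≤ r(x,z) + p(z,y) with r satisfying the triangle inequality. If lim_{n→∞} r(x_n, x_{n+1}) = 0 and lim_{n→∞} p(x_n, x_{n+1}) = 0, then lim_{n→∞} sup_{m>n} p(x_n, x_m) = 0. -/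
open Filter Topology Set

theorem pCauchy_of_ASF2 {X : Type*} (p r : X → X → ℝ)
    (hp : ∀ a b, 0 ≤ p a b) (hr : ∀ a b, 0 ≤ r a b)
    (hmix1 : ∀ a b c, p a b ≤ p a c + r c b)
    (hmix2 : ∀ a b c, p a b ≤ r a c + p c b)
    (hrtri : ∀ a b c, r a b ≤ r a c + r c b)
    (x : ℕ → X) (h2 : ASF2 p x)
    (hrlim : Filter.Tendsto (fun n => r (x n) (x (n + 1))) Filter.atTop (nhds 0))
    (hplim : Filter.Tendsto (fun n => p (x n) (x (n + 1))) Filter.atTop (nhds 0)) :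
    ∀ ε > (0:ℝ), ∃ N : ℕ, ∀ n ≥ N, ∀ m > n, p (x n) (x m) < ε := by
  intro ε hε
  obtain ⟨δ₁, hδ₁, ν, H₁⟩ := h2 (ε/2) (by linarith)
  set δ := min δ₁ (ε/2) with hδdef
  have hδ : 0 < δ := lt_min hδ₁ (by linarith)
  have hδε : δ ≤ ε/2 := min_le_right _ _
  have H : ∀ i j, ε/2 < p (x i) (x j) → p (x i) (x j) < ε/2 + δ →
      p (x (ν+i)) (x (ν+j)) ≤ ε/2 := by
    intro i j h1 h2'
    exact H₁ i j h1 (h2'.trans_le (by have := min_le_left δ₁ (ε/2); linarith))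
  set η := δ / (2*ν+2) with hηdef
  have hη : 0 < η := by positivity
  have hνη : (ν:ℝ) * η < δ/2 := by
    have h1 : (0:ℝ) < 2*ν+2 := by positivity
    rw [hηdef, ← mul_div_assoc, div_lt_div_iff₀ h1 two_pos]
    nlinarith [hδ, (Nat.cast_nonneg ν : (0:ℝ) ≤ ν)]
  have hηδ : η ≤ δ/2 := by
    rw [hηdef]
    apply div_le_div_of_nonneg_left hδ.le two_pos
    push_cast; linarith [(Nat.cast_nonneg ν : (0:ℝ) ≤ ν)]
  obtain ⟨N, hN⟩ := eventually_atTop.mp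
    ((hrlim.eventually (eventually_lt_nhds hη)).and
      (hplim.eventually (eventually_lt_nhds hη)))
  have L2 : ∀ (b : X) (s : ℕ), ∀ a ≥ N, p (x a) b ≤ s*η + p (x (a+s)) b := by
    intro b s
    induction s with
    | zero => intro a ha; simp
    | succ s ih =>
      intro a ha
      have h1 : p (x a) b ≤ r (x a) (x (a+1)) + p (x (a+1)) b := hmix2 _ _ _
      have h2 := ih (a+1) (by omega)
      have h3 := (hN a ha).1
      have e : a + 1 + s = a + (s+1) := by omega
      rw [e] at h2
      push_cast
      linarith
  have L1 : ∀ (a : ℕ) (s : ℕ), ∀ j ≥ N, p (x a) (x (j+s)) ≤ p (x a) (x j) + s*η := by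
    intro a s
    induction s with
    | zero => intro j hj; simp
    | succ s ih =>
      intro j hj
      have h1 : p (x a) (x (j+s+1)) ≤ p (x a) (x (j+s)) + r (x (j+s)) (x (j+s+1)) :=
        hmix1 _ _ _
      have h2 := ih j hj
      have h3 := (hN (j+s) (by omega)).1
      have e : j + (s+1) = j + s + 1 := by omega
      rw [e]
      push_cast
      linarith
  refine ⟨N, ?_⟩
  intro n hn m hm
  have hmax1 : 1 ≤ max ν 1 := le_max_right _ _
  have key : ∀ m, n < m → ∃ k, n < k ∧ k ≤ m ∧ m < k + max ν 1 ∧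
      p (x n) (x k) ≤ ε/2 + ν*η := by
    intro m hm
    induction m with
    | zero => omega
    | succ m ih =>
      rcases Nat.lt_or_ge n m with h | h
      · obtain ⟨k, hk1, hk2, hk3, hk4⟩ := ih h
        rcases Nat.lt_or_ge (m+1) (k + max ν 1) with hcase | hcase
        · exact ⟨k, hk1, by omega, hcase, hk4⟩
        · have hm1 : m + 1 = k + max ν 1 := by omega
          have hkN : N ≤ k := by omega
          rcases Nat.eq_zero_or_pos ν with rfl | hνpos
          · have hk : k = m := by simp at hm1; omega
            have hq : p (x n) (x m) ≤ ε/2 := by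
              rw [hk] at hk4; simpa using hk4
            have pm1 : p (x n) (x (m+1)) ≤ p (x n) (x m) + 1*η := by
              have := L1 n 1 m (by omega)
              simpa using this
            have hb : p (x n) (x (m+1)) ≤ ε/2 := by
              by_cases hgt : ε/2 < p (x n) (x (m+1))
              · have := H n (m+1) hgt (by linarith)
                simpa using this
              · linarith [not_lt.mp hgt]
            exact ⟨m+1, by omega, le_rfl, by omega, by simpa using hb⟩
          · have hmaxν : max ν 1 = ν := Nat.max_eq_left hνpos
            rw [hmaxν] at hm1
            have hν1 : (1:ℝ) ≤ (ν:ℝ) := by exact_mod_cast hνpos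
            have hνη0 : (0:ℝ) ≤ (ν:ℝ)*η := by positivity
            by_cases hq : ε/2 < p (x n) (x k)
            · have HH := H n k hq (by linarith)
              have hshift := L2 (x (ν+k)) ν n hn
              have e1 : n + ν = ν + n := by omega
              rw [e1] at hshift
              have hbound : p (x n) (x (ν+k)) ≤ ε/2 + ν*η := by linarith
              have e2 : ν + k = m + 1 := by omega
              rw [e2] at hbound
              exact ⟨m+1, by omega, le_rfl, by omega, hbound⟩
            · have hq' : p (x n) (x k) ≤ ε/2 := not_lt.mp hq
              have pk1 : p (x n) (x (k+1)) ≤ p (x n) (x k) + 1*η := by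
                have := L1 n 1 k hkN
                simpa using this
              refine ⟨k+1, by omega, by omega, by omega, ?_⟩
              have : (1:ℝ)*η ≤ (ν:ℝ)*η := by
                apply mul_le_mul_of_nonneg_right hν1 hη.le
              linarith
      · have hnm : n = m := by omega
        subst hnm
        have hbase : p (x n) (x (n+1)) < η := (hN n hn).2
        have hνη0 : (0:ℝ) ≤ (ν:ℝ)*η := by positivity
        exact ⟨n+1, by omega, le_rfl, by omega, by linarith⟩
  obtain ⟨k, hk1, hk2, hk3, hk4⟩ := key m hm
  have hmaxle : max ν 1 ≤ ν + 1 := max_le (by omega) (by omega)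
  have hs : m - k ≤ ν := by omega
  have hkN : N ≤ k := by omega
  have hchain := L1 n (m-k) k hkN
  have e : k + (m-k) = m := by omega
  rw [e] at hchain
  have hsη : ((m-k : ℕ):ℝ)*η ≤ (ν:ℝ)*η := by
    apply mul_le_mul_of_nonneg_right _ hη.le
    exact_mod_cast hs
  linarith
end

section
/- Let (T,S) be an (F,ψ)-contraction and let {x_n} be the alternating iteration sequence (x_{n+1} = Tx_n for n even, x_{n+1} = Sx_n for n odd, starting from x_0 = Sx). If lim_{n→∞} p(x_n, x_{n+1}) = 0, then {x_n} is a p-Cauchy sequence (i.e. for every ε > 0 there exists N such that p(x_n, x_m) < ε for all m, n ≥ N). -/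
open Set Filter Topology

/-- The quantity M(x,y) of the (F,ψ)-contraction condition. -/
noncomputable def Mfun {X : Type*} (p : X → X → ℝ) (T S : X → X) (x y : X) : ℝ :=
  max (max (p x y) (p (T x) x)) (max (p (S y) y) ((p (T x) y + p (S y) x) / 2))

/-- The pair (T,S) is an (F,ψ)-contraction. -/
def FpsiContraction {X : Type*} (p : X → X → ℝ) (T S : X → X) (F ψ : ℝ → ℝ) : Prop :=
  ∀ x y, F (p (T x) (S y)) ≤ ψ (F (Mfun p T S x y))


theorem alternating_cauchy {X : Type*} (p : X → X → ℝ) (hp : ∀ a b, 0 ≤ p a b)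
    (hsymm : ∀ a b, p a b = p b a)
    (htri : ∀ a b c, p a c ≤ p a b + p b c)
    (T S : X → X) (F ψ : ℝ → ℝ)
    (hFmono : MonotoneOn F (Set.Ici 0))
    (hFrc : ∀ t ≥ (0:ℝ), ContinuousWithinAt F (Set.Ici t) t)
    (hFpos : ∀ t ≥ (0:ℝ), t ≠ 0 → 0 < F t)
    (hψmono : MonotoneOn ψ (Set.Ici 0))
    (hψusc : UpperSemicontinuousOn ψ (Set.Ici 0))
    (hψlt : ∀ t > (0:ℝ), ψ t < t) (hψ0 : ψ 0 = 0)
    (hcontr : FpsiContraction p T S F ψ)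
    (x0 : X) (seq : ℕ → X)
    (hseq0 : seq 0 = S x0)
    (hseq : ∀ n, seq (n + 1) = if n % 2 = 0 then T (seq n) else S (seq n))
    (hlim : Filter.Tendsto (fun n => p (seq n) (seq (n + 1))) Filter.atTop (nhds 0)) :
    ∀ ε > (0:ℝ), ∃ N : ℕ, ∀ m ≥ N, ∀ n ≥ N, p (seq m) (seq n) < ε := by
  classical
  by_contra hcon
  push_neg at hcon
  obtain ⟨ε, hε, hnc⟩ := hcon
  -- small successive distances
  have hd : ∀ δ : ℝ, 0 < δ → ∃ N, ∀ k, N ≤ k → p (seq k) (seq (k + 1)) < δ := by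
    intro δ hδ
    obtain ⟨N, hN⟩ := Metric.tendsto_atTop.mp hlim δ hδ
    refine ⟨N, fun k hk => ?_⟩
    have h1 := hN k hk
    rw [Real.dist_eq, sub_zero] at h1
    exact lt_of_abs_lt h1
  have hT : ∀ k, k % 2 = 0 → seq (k + 1) = T (seq k) := by
    intro k hk; rw [hseq k, if_pos hk]
  have hS : ∀ k, k % 2 = 1 → seq (k + 1) = S (seq k) := by
    intro k hk; rw [hseq k, if_neg (by omega)]
  -- KEY inequality
  have key : ∀ e : ℝ, 0 < e → e ≤ ε → ∀ δ : ℝ, 0 < δ → 8 * δ < e →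
      F (e - 2 * δ) ≤ ψ (F (e + 2 * δ)) := by
    intro e he heε δ hδ h8
    obtain ⟨N₀, hN₀⟩ := hd δ hδ
    obtain ⟨m₀, hm₀, n₀, hn₀, hpair⟩ := hnc (N₀ + 4)
    have hself : ∀ k, N₀ ≤ k → p (seq k) (seq k) < 2 * δ := by
      intro k hk
      have h1 := htri (seq k) (seq (k + 1)) (seq k)
      have h2 := hN₀ k hk
      have h3 : p (seq (k + 1)) (seq k) = p (seq k) (seq (k + 1)) := hsymm _ _
      linarith
    obtain ⟨a, b, hba, haN, hbN, hpab⟩ :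
        ∃ a b, b < a ∧ N₀ + 4 ≤ a ∧ N₀ + 4 ≤ b ∧ ε ≤ p (seq a) (seq b) := by
      rcases lt_trichotomy n₀ m₀ with h | h | h
      · exact ⟨m₀, n₀, h, hm₀, hn₀, hpair⟩
      · exfalso
        rw [h] at hpair
        have := hself m₀ (by omega)
        linarith
      · exact ⟨n₀, m₀, h, hn₀, hm₀, by rw [hsymm]; exact hpair⟩
    have hpab' : e ≤ p (seq a) (seq b) := le_trans heε hpab
    -- make the smaller index even
    obtain ⟨n, hne, hnN, hna, hpn⟩ :
        ∃ n, n % 2 = 0 ∧ N₀ + 3 ≤ n ∧ n < a ∧ e - δ ≤ p (seq a) (seq n) := by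
      rcases Nat.even_or_odd b with hb | hb
      · exact ⟨b, Nat.even_iff.mp hb, by omega, hba, by linarith⟩
      · have hbo : b % 2 = 1 := Nat.odd_iff.mp hb
        refine ⟨b - 1, by omega, by omega, by omega, ?_⟩
        have hdb : p (seq (b - 1)) (seq b) < δ := by
          have h1 := hN₀ (b - 1) (by omega)
          rwa [show b - 1 + 1 = b from by omega] at h1
        have h1 := htri (seq a) (seq (b - 1)) (seq b)
        have h2 : p (seq (b - 1)) (seq b) = p (seq b) (seq (b - 1)) := hsymm _ _
        linarith
    -- make the larger index odd
    obtain ⟨m₁, hm₁o, hm₁n, hpm₁⟩ :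
        ∃ m₁, m₁ % 2 = 1 ∧ n < m₁ ∧ e - 2 * δ ≤ p (seq m₁) (seq n) := by
      rcases Nat.even_or_odd a with ha | ha
      · have hae : a % 2 = 0 := Nat.even_iff.mp ha
        refine ⟨a + 1, by omega, by omega, ?_⟩
        have hda : p (seq a) (seq (a + 1)) < δ := hN₀ a (by omega)
        have h1 := htri (seq a) (seq (a + 1)) (seq n)
        linarith
      · exact ⟨a, Nat.odd_iff.mp ha, hna, by linarith⟩
    have hPne : ∃ m, m % 2 = 1 ∧ n < m ∧ e - 2 * δ ≤ p (seq m) (seq n) :=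
      ⟨m₁, hm₁o, hm₁n, hpm₁⟩
    obtain ⟨m, ⟨hmo, hmn, hpm⟩, hmmin⟩ :
        ∃ m, (m % 2 = 1 ∧ n < m ∧ e - 2 * δ ≤ p (seq m) (seq n)) ∧
          ∀ k, k < m → ¬(k % 2 = 1 ∧ n < k ∧ e - 2 * δ ≤ p (seq k) (seq n)) :=
      ⟨Nat.find hPne, Nat.find_spec hPne, fun k hk => Nat.find_min hPne hk⟩
    have hm3 : n + 3 ≤ m := by
      by_contra hlt
      have hm1 : m = n + 1 := by omega
      have h1 : p (seq m) (seq n) < δ := by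
        rw [hm1, hsymm]; exact hN₀ n (by omega)
      linarith
    -- upper bound on p (seq m) (seq n)
    have hless : p (seq (m - 2)) (seq n) < e - 2 * δ := by
      by_contra hge
      exact hmmin (m - 2) (by omega) ⟨by omega, by omega, le_of_not_gt hge⟩
    have hd1 : p (seq m) (seq (m - 1)) < δ := by
      rw [hsymm]
      have h1 := hN₀ (m - 1) (by omega)
      rwa [show m - 1 + 1 = m from by omega] at h1
    have hd2 : p (seq (m - 1)) (seq (m - 2)) < δ := by
      rw [hsymm]
      have h1 := hN₀ (m - 2) (by omega)
      rwa [show m - 2 + 1 = m - 1 from by omega] at h1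
    have hub : p (seq m) (seq n) < e := by
      have h1 := htri (seq m) (seq (m - 1)) (seq n)
      have h2 := htri (seq (m - 1)) (seq (m - 2)) (seq n)
      linarith
    have hdn : p (seq n) (seq (n - 1)) < δ := by
      rw [hsymm]
      have h1 := hN₀ (n - 1) (by omega)
      rwa [show n - 1 + 1 = n from by omega] at h1
    -- contraction step
    have hTm : seq m = T (seq (m - 1)) := by
      have h1 := hT (m - 1) (by omega)
      rwa [show m - 1 + 1 = m from by omega] at h1
    have hSn : seq n = S (seq (n - 1)) := by
      have h1 := hS (n - 1) (by omega)
      rwa [show n - 1 + 1 = n from by omega] at h1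
    have t2 : p (seq m) (seq (n - 1)) < e + δ := by
      have h1 := htri (seq m) (seq n) (seq (n - 1))
      linarith
    have t3 : p (seq n) (seq (m - 1)) < e + δ := by
      have h1 := htri (seq n) (seq m) (seq (m - 1))
      have h2 : p (seq n) (seq m) = p (seq m) (seq n) := hsymm _ _
      linarith
    have t1 : p (seq (m - 1)) (seq (n - 1)) < e + 2 * δ := by
      have h1 := htri (seq (m - 1)) (seq m) (seq (n - 1))
      have h2 : p (seq (m - 1)) (seq m) = p (seq m) (seq (m - 1)) := hsymm _ _
      linarith
    have hMeq : Mfun p T S (seq (m - 1)) (seq (n - 1)) =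
        max (max (p (seq (m - 1)) (seq (n - 1))) (p (seq m) (seq (m - 1))))
          (max (p (seq n) (seq (n - 1)))
            ((p (seq m) (seq (n - 1)) + p (seq n) (seq (m - 1))) / 2)) := by
      unfold Mfun
      rw [← hTm, ← hSn]
    have hMle : Mfun p T S (seq (m - 1)) (seq (n - 1)) ≤ e + 2 * δ := by
      rw [hMeq]
      refine max_le (max_le t1.le (by linarith)) (max_le (by linarith) (by linarith))
    have hMge : e - 4 * δ ≤ Mfun p T S (seq (m - 1)) (seq (n - 1)) := by
      have hfirst : p (seq (m - 1)) (seq (n - 1)) ≤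
          Mfun p T S (seq (m - 1)) (seq (n - 1)) := by
        rw [hMeq]
        exact le_trans (le_max_left _ _) (le_max_left _ _)
      have h1 := htri (seq m) (seq (m - 1)) (seq n)
      have h2 := htri (seq (m - 1)) (seq (n - 1)) (seq n)
      have h3 : p (seq (n - 1)) (seq n) = p (seq n) (seq (n - 1)) := hsymm _ _
      linarith
    have hMpos : 0 < Mfun p T S (seq (m - 1)) (seq (n - 1)) := by linarith
    have hc := hcontr (seq (m - 1)) (seq (n - 1))
    rw [← hTm, ← hSn] at hc
    have hFM : 0 < F (Mfun p T S (seq (m - 1)) (seq (n - 1))) :=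
      hFpos _ hMpos.le (ne_of_gt hMpos)
    have hFMle : F (Mfun p T S (seq (m - 1)) (seq (n - 1))) ≤ F (e + 2 * δ) :=
      hFmono (Set.mem_Ici.mpr hMpos.le) (Set.mem_Ici.mpr (by linarith)) hMle
    calc F (e - 2 * δ) ≤ F (p (seq m) (seq n)) :=
          hFmono (Set.mem_Ici.mpr (by linarith)) (Set.mem_Ici.mpr (hp _ _)) hpm
      _ ≤ ψ (F (Mfun p T S (seq (m - 1)) (seq (n - 1)))) := hc
      _ ≤ ψ (F (e + 2 * δ)) :=
          hψmono (Set.mem_Ici.mpr hFM.le)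
            (Set.mem_Ici.mpr (le_trans hFM.le hFMle)) hFMle
  -- F jumps at every point of (0, ε]
  have jump : ∀ e : ℝ, ∃ q : ℚ, 0 < e → e ≤ ε →
      (∀ t, 0 ≤ t → t < e → F t < (q : ℝ)) ∧ (q : ℝ) < F e := by
    intro e
    by_cases hcase : 0 < e ∧ e ≤ ε
    · obtain ⟨he, heε⟩ := hcase
      have hFe : 0 < F e := hFpos e he.le (ne_of_gt he)
      have husc := hψusc (F e) (Set.mem_Ici.mpr hFe.le) (F e) (hψlt _ hFe)
      obtain ⟨r, hr, hball⟩ := Metric.mem_nhdsWithin_iff.mp husc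
      have hev : F ⁻¹' Metric.ball (F e) r ∈ 𝓝[Set.Ici e] e :=
        (hFrc e he.le) (Metric.ball_mem_nhds _ hr)
      obtain ⟨δ₂, hδ₂, hsub⟩ := Metric.mem_nhdsWithin_iff.mp hev
      set δ₁ := min (δ₂ / 4) (e / 16) with hδ₁def
      have hδ₁ : 0 < δ₁ := lt_min (by linarith) (by linarith)
      have hδ₁a : δ₁ ≤ δ₂ / 4 := min_le_left _ _
      have hδ₁b : δ₁ ≤ e / 16 := min_le_right _ _
      have hmem : e + 2 * δ₁ ∈ Metric.ball e δ₂ ∩ Set.Ici e := by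
        constructor
        · rw [Metric.mem_ball, Real.dist_eq,
            show e + 2 * δ₁ - e = 2 * δ₁ from by ring, abs_of_pos (by linarith)]
          linarith
        · exact Set.mem_Ici.mpr (by linarith)
      have hFball := hsub hmem
      have hFe1 : F e ≤ F (e + 2 * δ₁) :=
        hFmono (Set.mem_Ici.mpr he.le) (Set.mem_Ici.mpr (by linarith)) (by linarith)
      have hc1 : ψ (F (e + 2 * δ₁)) < F e :=
        hball ⟨hFball, Set.mem_Ici.mpr (le_trans hFe.le hFe1)⟩
      have hbound : ∀ t, 0 ≤ t → t < e → F t ≤ ψ (F (e + 2 * δ₁)) := by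
        intro t ht hte
        set δ := min ((e - t) / 2) δ₁ with hδdef
        have hδpos : 0 < δ := lt_min (by linarith) hδ₁
        have hδle : δ ≤ δ₁ := min_le_right _ _
        have hδt : δ ≤ (e - t) / 2 := min_le_left _ _
        have h8 : 8 * δ < e := by linarith
        have h1 : F t ≤ F (e - 2 * δ) :=
          hFmono (Set.mem_Ici.mpr ht) (Set.mem_Ici.mpr (by linarith)) (by linarith)
        have h2 := key e he heε δ hδpos h8
        have h3 : F (e + 2 * δ) ≤ F (e + 2 * δ₁) :=
          hFmono (Set.mem_Ici.mpr (by linarith)) (Set.mem_Ici.mpr (by linarith))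
            (by linarith)
        have hF2 : 0 < F (e + 2 * δ) := hFpos _ (by linarith) (by positivity)
        have h4 : ψ (F (e + 2 * δ)) ≤ ψ (F (e + 2 * δ₁)) :=
          hψmono (Set.mem_Ici.mpr hF2.le) (Set.mem_Ici.mpr (le_trans hF2.le h3)) h3
        linarith
      obtain ⟨q, hq1, hq2⟩ := exists_rat_btwn hc1
      exact ⟨q, fun _ _ => ⟨fun t ht hte => lt_of_le_of_lt (hbound t ht hte) hq1, hq2⟩⟩
    · exact ⟨0, fun h1 h2 => absurd ⟨h1, h2⟩ hcase⟩
  choose q hq using jump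
  have hmono : StrictMonoOn q (Set.Ioc 0 ε) := by
    intro e₁ h₁ e₂ h₂ h12
    have a1 := (hq e₁ h₁.1 h₁.2).2
    have a2 := (hq e₂ h₂.1 h₂.2).1 e₁ h₁.1.le h12
    exact_mod_cast lt_trans a1 a2
  have hcount : (Set.Ioc (0 : ℝ) ε).Countable := by
    refine Set.countable_iff_exists_injOn.mpr
      ⟨fun e => Encodable.encode (q e), ?_⟩
    intro x hx y hy hxy
    exact hmono.injOn hx hy (Encodable.encode_injective hxy)
  have hcard : (Cardinal.mk (Set.Ioc (0 : ℝ) ε)) = Cardinal.continuum :=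
    Cardinal.mk_Ioc_real hε
  have := hcount.le_aleph0
  rw [hcard] at this
  exact absurd this (not_le.mpr Cardinal.aleph0_lt_continuum)
end

section
/- Let ψ : [0,∞) → [0,∞) be nondecreasing, right upper semicontinuous, with ψ(t) < t for each t > 0. Then the iterates ψ_n = ψ∘⋯∘ψ (n times) satisfy: limsup_n ψ_n(ε) < ε for all ε > 0. -/
open Filter Set

theorem iterates_limsup_lt (ψ : ℝ → ℝ)
    (hψmono : MonotoneOn ψ (Set.Ici 0))
    (hψnonneg : ∀ t ≥ (0:ℝ), 0 ≤ ψ t)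
    (hψrusc : ∀ t ≥ (0:ℝ), ∀ ε > (0:ℝ), ∃ δ > (0:ℝ), ∀ s, t ≤ s → s < t + δ → ψ s < ψ t + ε)
    (hψlt : ∀ t > (0:ℝ), ψ t < t) :
    ∀ ε > (0:ℝ), Filter.limsup (fun n => ψ^[n] ε) Filter.atTop < ε := by
  intro ε hε
  -- ψ 0 ≤ 0
  have hψ0 : ψ 0 ≤ 0 := by
    by_contra h
    push_neg at h
    have := hψlt (ψ 0) h
    have h2 : ψ 0 ≤ ψ (ψ 0) := hψmono (by simp) (le_of_lt h) (le_of_lt h)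
    linarith
  set a : ℕ → ℝ := fun n => ψ^[n] ε with ha
  have hnonneg : ∀ n, 0 ≤ a n := by
    intro n
    induction n with
    | zero => exact le_of_lt hε
    | succ k ih =>
      have : a (k+1) = ψ (a k) := by
        simp [ha, Function.iterate_succ_apply']
      rw [this]
      exact hψnonneg _ ih
  have hstep : ∀ n, a (n+1) ≤ a n := by
    intro n
    have he : a (n+1) = ψ (a n) := by
      simp [ha, Function.iterate_succ_apply']
    rw [he]
    rcases lt_or_eq_of_le (hnonneg n) with h | h
    · exact le_of_lt (hψlt _ h)
    · rw [← h]; exact hψ0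
  have hanti : Antitone a := antitone_nat_of_succ_le hstep
  have hbdd : BddBelow (Set.range a) := ⟨0, by rintro x ⟨n, rfl⟩; exact hnonneg n⟩
  have htend : Tendsto a atTop (nhds (⨅ n, a n)) := tendsto_atTop_ciInf hanti hbdd
  have hls : limsup a atTop = ⨅ n, a n := htend.limsup_eq
  rw [hls]
  calc (⨅ n, a n) ≤ a 1 := ciInf_le hbdd 1
    _ = ψ ε := by simp [ha]
    _ < ε := hψlt ε hε
end

section
/- Let ψ : [0,∞) → [0,∞) be nondecreasing, right upper semicontinuous, with ψ(t) < t for each t > 0. Then for each ε > 0 there exists δ > 0 such that for each t ∈ [ε, ε+δ] there exists ν ∈ ℕ with ψ_ν(t) < ε. -/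
open Set

theorem iterates_C7 (ψ : ℝ → ℝ)
    (hψmono : MonotoneOn ψ (Set.Ici 0))
    (hψnonneg : ∀ t ≥ (0:ℝ), 0 ≤ ψ t)
    (hψrusc : ∀ t ≥ (0:ℝ), ∀ ε > (0:ℝ), ∃ δ > (0:ℝ), ∀ s, t ≤ s → s < t + δ → ψ s < ψ t + ε)
    (hψlt : ∀ t > (0:ℝ), ψ t < t) :
    ∀ ε > (0:ℝ), ∃ δ > (0:ℝ), ∀ t, ε ≤ t → t ≤ ε + δ → ∃ ν : ℕ, ψ^[ν] t < ε := by
  intro ε hε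
  have hlt : ψ ε < ε := hψlt ε hε
  obtain ⟨δ, hδ, h⟩ := hψrusc ε hε.le (ε - ψ ε) (by linarith)
  refine ⟨δ / 2, by linarith, fun t ht1 ht2 => ⟨1, ?_⟩⟩
  have := h t ht1 (by linarith)
  simpa using by linarith
end
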